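/- Let A be an n×n quaternion matrix. Define the map f : ℂ → ℂ by f(λ) = e^λ if Im(e^λ) ≥ 0 and f(λ) = e^{conj(λ)} otherwise. Then the multiset of standard eigenvalues of exp(A) equals the image under f of the multiset of standard eigenvalues of A. -/

import Mathlib

open Matrix Polynomial
open scoped Quaternion

noncomputable section

/-- The two complex components of a quaternion: `q = c1 q + (c2 q) * j`,
identifying `ℂ` with the real span of `1` and `i` in `ℍ`. -/
def Quaternion.c1 (q : ℍ[ℝ]) : ℂ := ⟨q.re, q.imI⟩

def Quaternion.c2 (q : ℍ[ℝ]) : ℂ := ⟨q.imJ, q.imK⟩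

/-- The embedding of `ℂ` into `ℍ` as the real span of `1` and `i`. -/
def Complex.toQuat (z : ℂ) : ℍ[ℝ] := ⟨z.re, z.im, 0, 0⟩

/-- The complex adjoint matrix `χ_A` of a quaternion matrix `A = A₁ + A₂·j`:
the block matrix `[[A₁, A₂], [-conj A₂, conj A₁]]`. -/
def chiMat {n : ℕ} (A : Matrix (Fin n) (Fin n) ℍ[ℝ]) :
    Matrix (Fin n ⊕ Fin n) (Fin n ⊕ Fin n) ℂ :=
  Matrix.fromBlocks (A.map Quaternion.c1) (A.map Quaternion.c2)
    ((-(A.map Quaternion.c2)).map (starRingEnd ℂ)) ((A.map Quaternion.c1).map (starRingEnd ℂ))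

/-- `ρ` is a standard eigenvalue of the quaternion matrix `A`: an eigenvalue of the
complex adjoint matrix `χ_A` with nonnegative imaginary part. -/
def IsStdEigenvalue {n : ℕ} (A : Matrix (Fin n) (Fin n) ℍ[ℝ]) (ρ : ℂ) : Prop :=
  (chiMat A).charpoly.IsRoot ρ ∧ 0 ≤ ρ.im

/-- `s` is the multiset of standard eigenvalues of `A` counted with multiplicity:
it has `n` elements, all with nonnegative imaginary part, and the characteristic
polynomial of `χ_A` is `∏_{z ∈ s} (X - z)·(X - conj z)`. -/
def IsStdEigs {n : ℕ} (A : Matrix (Fin n) (Fin n) ℍ[ℝ]) (s : Multiset ℂ) : Prop :=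
  Multiset.card s = n ∧ (∀ z ∈ s, 0 ≤ z.im) ∧
    (chiMat A).charpoly =
      (s.map (fun z => (X - C z) * (X - C (starRingEnd ℂ z)))).prod

/-- `x : ℝ → ℍ^n` is a solution of the linear quaternionic system `ẋ = A(t)x`. -/
def IsSol {n : ℕ} (A : ℝ → Matrix (Fin n) (Fin n) ℍ[ℝ]) (x : ℝ → Fin n → ℍ[ℝ]) : Prop :=
  ∀ t : ℝ, HasDerivAt x ((A t).mulVec (x t)) t

/-- The norm `‖x‖ = Σ_k |x_k|` on `ℍ^n`. -/
def vecNorm {n : ℕ} (x : Fin n → ℍ[ℝ]) : ℝ := ∑ k, ‖x k‖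

/-- The norm `‖A‖ = Σ_{i,j} |a_{ij}|` on `ℍ^{n×n}`. -/
def matNorm {n : ℕ} (A : Matrix (Fin n) (Fin n) ℍ[ℝ]) : ℝ := ∑ i, ∑ j, ‖A i j‖

/-- Stability (in the sense of Lyapunov) of the system `ẋ = A(t)x` at `t₀`. -/
def StableAt {n : ℕ} (A : ℝ → Matrix (Fin n) (Fin n) ℍ[ℝ]) (t₀ : ℝ) : Prop :=
  ∀ ε > (0:ℝ), ∃ δ > (0:ℝ), ∀ x : ℝ → Fin n → ℍ[ℝ], IsSol A x →
    vecNorm (x t₀) < δ → ∀ t ≥ t₀, vecNorm (x t) < ε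

/-- Asymptotic stability of the system `ẋ = A(t)x` at `t₀`. -/
def AsympStableAt {n : ℕ} (A : ℝ → Matrix (Fin n) (Fin n) ℍ[ℝ]) (t₀ : ℝ) : Prop :=
  StableAt A t₀ ∧ ∃ δ > (0:ℝ), ∀ x : ℝ → Fin n → ℍ[ℝ], IsSol A x →
    vecNorm (x t₀) < δ →
      Filter.Tendsto (fun t => vecNorm (x t)) Filter.atTop (nhds 0)

/-- `M` is a fundamental matrix of `ẋ = A(t)x`: entrywise `M'(t) = A(t)·M(t)`
and `M(t)` is invertible for every `t`. -/
def IsFundamental {n : ℕ} (A M : ℝ → Matrix (Fin n) (Fin n) ℍ[ℝ]) : Prop :=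
  (∀ (t : ℝ) (i j : Fin n), HasDerivAt (fun s => M s i j) ((A t * M t) i j) t) ∧
    ∀ t : ℝ, IsUnit (M t)

open scoped Nat

namespace Quaternion

@[simp] lemma c1_add (p q : ℍ[ℝ]) : c1 (p + q) = c1 p + c1 q := by
  simp [c1, Complex.ext_iff]

@[simp] lemma c2_add (p q : ℍ[ℝ]) : c2 (p + q) = c2 p + c2 q := by
  simp [c2, Complex.ext_iff]

@[simp] lemma c1_smul (r : ℝ) (q : ℍ[ℝ]) : c1 (r • q) = r • c1 q := by
  simp [c1, Complex.ext_iff, Complex.real_smul]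

@[simp] lemma c2_smul (r : ℝ) (q : ℍ[ℝ]) : c2 (r • q) = r • c2 q := by
  simp [c2, Complex.ext_iff, Complex.real_smul]

@[simp] lemma c1_one : c1 1 = 1 := by simp [c1, Complex.ext_iff]
@[simp] lemma c2_one : c2 1 = 0 := by simp [c2, Complex.ext_iff]
@[simp] lemma c1_zero : c1 0 = 0 := by simp [c1, Complex.ext_iff]
@[simp] lemma c2_zero : c2 0 = 0 := by simp [c2, Complex.ext_iff]

lemma c1_mul (p q : ℍ[ℝ]) :
    c1 (p * q) = c1 p * c1 q - c2 p * (starRingEnd ℂ) (c2 q) := by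
  simp [c1, c2, Complex.ext_iff, Quaternion.re_mul, Quaternion.imI_mul,
    Complex.mul_re, Complex.mul_im]
  constructor <;> ring

lemma c2_mul (p q : ℍ[ℝ]) :
    c2 (p * q) = c1 p * c2 q + c2 p * (starRingEnd ℂ) (c1 q) := by
  simp [c1, c2, Complex.ext_iff, Quaternion.imJ_mul, Quaternion.imK_mul,
    Complex.mul_re, Complex.mul_im]
  constructor <;> ring

/-- `c1` as an `ℝ`-linear map. -/
def c1ₗ : ℍ[ℝ] →ₗ[ℝ] ℂ where
  toFun := c1
  map_add' := c1_add
  map_smul' := c1_smul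

/-- `c2` as an `ℝ`-linear map. -/
def c2ₗ : ℍ[ℝ] →ₗ[ℝ] ℂ where
  toFun := c2
  map_add' := c2_add
  map_smul' := c2_smul

end Quaternion


open Quaternion in
lemma chiMat_mul {n : ℕ} (A B : Matrix (Fin n) (Fin n) ℍ[ℝ]) :
    chiMat (A * B) = chiMat A * chiMat B := by
  have c1s : ∀ (g : Fin n → ℍ[ℝ]), c1 (∑ k, g k) = ∑ k, c1 (g k) := fun g => map_sum c1ₗ g _
  have c2s : ∀ (g : Fin n → ℍ[ℝ]), c2 (∑ k, g k) = ∑ k, c2 (g k) := fun g => map_sum c2ₗ g _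
  ext i j
  rcases i with i | i <;> rcases j with j | j <;>
    simp only [chiMat, Matrix.mul_apply, Matrix.fromBlocks_apply₁₁, Matrix.fromBlocks_apply₁₂,
      Matrix.fromBlocks_apply₂₁, Matrix.fromBlocks_apply₂₂, Matrix.map_apply, Matrix.neg_apply,
      Fintype.sum_sum_type, c1s, c2s, map_neg, map_sum, _root_.map_mul, map_sub, map_add,
      Complex.conj_conj, mul_neg, neg_neg, neg_mul, Finset.sum_neg_distrib] <;>
    simp only [← Finset.sum_neg_distrib, ← Finset.sum_add_distrib] <;>
    refine Finset.sum_congr rfl fun k _ => ?_ <;>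
    simp only [c1_mul, c2_mul, map_sub, map_add, _root_.map_mul, Complex.conj_conj, map_neg] <;>
    ring

open Quaternion in
lemma chiMat_add {n : ℕ} (A B : Matrix (Fin n) (Fin n) ℍ[ℝ]) :
    chiMat (A + B) = chiMat A + chiMat B := by
  ext i j
  rcases i with i | i <;> rcases j with j | j <;>
    simp [chiMat, Matrix.map_apply, Matrix.fromBlocks_apply₁₁, Matrix.fromBlocks_apply₁₂,
      Matrix.fromBlocks_apply₂₁, Matrix.fromBlocks_apply₂₂] <;> ring

open Quaternion in
lemma chiMat_smul {n : ℕ} (r : ℝ) (A : Matrix (Fin n) (Fin n) ℍ[ℝ]) :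
    chiMat (r • A) = r • chiMat A := by
  ext i j
  rcases i with i | i <;> rcases j with j | j <;>
    simp [chiMat, Matrix.map_apply, Complex.real_smul, Matrix.fromBlocks_apply₁₁,
      Matrix.fromBlocks_apply₁₂, Matrix.fromBlocks_apply₂₁, Matrix.fromBlocks_apply₂₂]

open Quaternion in
lemma chiMat_one {n : ℕ} : chiMat (1 : Matrix (Fin n) (Fin n) ℍ[ℝ]) = 1 := by
  ext i j
  rcases i with i | i <;> rcases j with j | j <;>
    simp [chiMat, Matrix.map_apply, Matrix.one_apply, Matrix.fromBlocks_apply₁₁,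
      Matrix.fromBlocks_apply₁₂, Matrix.fromBlocks_apply₂₁, Matrix.fromBlocks_apply₂₂,
      apply_ite]

/-- `chiMat` as a ring homomorphism. -/
def chiHom {n : ℕ} : Matrix (Fin n) (Fin n) ℍ[ℝ] →+* Matrix (Fin n ⊕ Fin n) (Fin n ⊕ Fin n) ℂ where
  toFun := chiMat
  map_one' := chiMat_one
  map_mul' := chiMat_mul
  map_zero' := by
    have := chiMat_smul (n := n) 0 0
    simpa using this
  map_add' := chiMat_add

/-- `chiMat` as an `ℝ`-linear map. -/
def chiLin {n : ℕ} : Matrix (Fin n) (Fin n) ℍ[ℝ] →ₗ[ℝ] Matrix (Fin n ⊕ Fin n) (Fin n ⊕ Fin n) ℂ where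
  toFun := chiMat
  map_add' := chiMat_add
  map_smul' := chiMat_smul

lemma chiMat_continuous {n : ℕ} : Continuous (chiMat (n := n)) :=
  chiLin.continuous_of_finiteDimensional

lemma chiMat_exp {n : ℕ} (A : Matrix (Fin n) (Fin n) ℍ[ℝ]) :
    chiMat (NormedSpace.exp A) = NormedSpace.exp (chiMat A) := by
  letI : SeminormedRing (Matrix (Fin n) (Fin n) ℍ[ℝ]) := Matrix.linftyOpSemiNormedRing
  letI : NormedRing (Matrix (Fin n) (Fin n) ℍ[ℝ]) := Matrix.linftyOpNormedRing
  letI : NormedAlgebra ℝ (Matrix (Fin n) (Fin n) ℍ[ℝ]) := Matrix.linftyOpNormedAlgebra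
  letI : NormedAlgebra ℚ (Matrix (Fin n) (Fin n) ℍ[ℝ]) := NormedAlgebra.restrictScalars ℚ ℝ _
  letI : SeminormedRing (Matrix (Fin n ⊕ Fin n) (Fin n ⊕ Fin n) ℂ) := Matrix.linftyOpSemiNormedRing
  letI : NormedRing (Matrix (Fin n ⊕ Fin n) (Fin n ⊕ Fin n) ℂ) := Matrix.linftyOpNormedRing
  letI : NormedAlgebra ℝ (Matrix (Fin n ⊕ Fin n) (Fin n ⊕ Fin n) ℂ) := Matrix.linftyOpNormedAlgebra
  exact NormedSpace.map_exp (chiHom (n := n)) chiMat_continuous A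


section ComplexMatrix

variable {l p : Type*} [Fintype l] [DecidableEq l] [Fintype p] [DecidableEq p]

lemma charmatrix_eq (M : Matrix l l ℂ) :
    charmatrix M = Matrix.scalar l (X : ℂ[X]) - M.map C := by
  ext i j
  by_cases h : i = j
  · subst h; simp [charmatrix_apply_eq, Matrix.scalar_apply, Matrix.map_apply]
  · simp [charmatrix_apply_ne _ _ _ h, Matrix.scalar_apply, Matrix.map_apply,
      Matrix.diagonal_apply_ne _ h]

lemma charpoly_conj' {P : Matrix l l ℂ} (hP : IsUnit P.det) (M : Matrix l l ℂ) :
    (P⁻¹ * M * P).charpoly = M.charpoly := by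
  have hmul : P.map C * charmatrix (P⁻¹ * M * P) = charmatrix M * P.map C := by
    rw [charmatrix_eq, charmatrix_eq, mul_sub, sub_mul]
    congr 1
    · exact (scalar_commute (X : ℂ[X]) (fun r => Commute.all _ _) (P.map C)).symm
    · rw [← Matrix.map_mul, ← Matrix.map_mul]
      congr 1
      rw [Matrix.mul_assoc, ← Matrix.mul_assoc P P⁻¹,
        Matrix.mul_nonsing_inv _ hP, Matrix.one_mul]
  have hdet := congrArg Matrix.det hmul
  rw [Matrix.det_mul, Matrix.det_mul] at hdet
  have hPC : (P.map C).det ≠ 0 := by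
    rw [← RingHom.mapMatrix_apply, ← RingHom.map_det]
    exact C_ne_zero.mpr hP.ne_zero
  exact mul_left_cancel₀ hPC (hdet.trans (mul_comm _ _))

lemma exp_reindex {m : Type*} [Fintype m] [DecidableEq m] (e : l ≃ m) (M : Matrix l l ℂ) :
    NormedSpace.exp (reindex e e M) = reindex e e (NormedSpace.exp M) := by
  letI : SeminormedRing (Matrix l l ℂ) := Matrix.linftyOpSemiNormedRing
  letI : NormedRing (Matrix l l ℂ) := Matrix.linftyOpNormedRing
  letI : NormedAlgebra ℝ (Matrix l l ℂ) := Matrix.linftyOpNormedAlgebra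
  letI : NormedAlgebra ℚ (Matrix l l ℂ) := NormedAlgebra.restrictScalars ℚ ℝ _
  letI : SeminormedRing (Matrix m m ℂ) := Matrix.linftyOpSemiNormedRing
  letI : NormedRing (Matrix m m ℂ) := Matrix.linftyOpNormedRing
  letI : NormedAlgebra ℝ (Matrix m m ℂ) := Matrix.linftyOpNormedAlgebra
  exact (NormedSpace.map_exp ((reindexAlgEquiv ℝ ℂ e : Matrix l l ℂ ≃ₐ[ℝ] Matrix m m ℂ) :
    Matrix l l ℂ →+* Matrix m m ℂ) (continuous_id.matrix_reindex e e) M).symm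

lemma pow_fromBlocks (B : Matrix l l ℂ) (Cm : Matrix p l ℂ) (D : Matrix p p ℂ) (k : ℕ) :
    ∃ E, (fromBlocks B 0 Cm D) ^ k = fromBlocks (B ^ k) 0 E (D ^ k) := by
  induction k with
  | zero => exact ⟨0, by simp [← fromBlocks_one]⟩
  | succ k ih =>
    obtain ⟨E, hE⟩ := ih
    refine ⟨E * B + D ^ k * Cm, ?_⟩
    rw [pow_succ, hE, fromBlocks_multiply]
    simp [pow_succ]

lemma exp_fromBlocks (B : Matrix l l ℂ) (Cm : Matrix p l ℂ) (D : Matrix p p ℂ) :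
    ∃ E, NormedSpace.exp (fromBlocks B 0 Cm D) =
      fromBlocks (NormedSpace.exp B) 0 E (NormedSpace.exp D) := by
  letI : SeminormedRing (Matrix l l ℂ) := Matrix.linftyOpSemiNormedRing
  letI : NormedRing (Matrix l l ℂ) := Matrix.linftyOpNormedRing
  letI : NormedAlgebra ℝ (Matrix l l ℂ) := Matrix.linftyOpNormedAlgebra
  letI : SeminormedRing (Matrix p p ℂ) := Matrix.linftyOpSemiNormedRing
  letI : NormedRing (Matrix p p ℂ) := Matrix.linftyOpNormedRing
  letI : NormedAlgebra ℝ (Matrix p p ℂ) := Matrix.linftyOpNormedAlgebra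
  letI : SeminormedRing (Matrix (l ⊕ p) (l ⊕ p) ℂ) := Matrix.linftyOpSemiNormedRing
  letI : NormedRing (Matrix (l ⊕ p) (l ⊕ p) ℂ) := Matrix.linftyOpNormedRing
  letI : NormedAlgebra ℝ (Matrix (l ⊕ p) (l ⊕ p) ℂ) := Matrix.linftyOpNormedAlgebra
  set S := fromBlocks B 0 Cm D with hS
  refine ⟨(NormedSpace.exp S).toBlocks₂₁, ?_⟩
  have hsum : HasSum (fun k : ℕ => ((k ! : ℝ))⁻¹ • S ^ k) (NormedSpace.exp S) := by
    rw [NormedSpace.exp_eq_tsum ℝ]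
    exact (NormedSpace.expSeries_summable' (𝕂 := ℝ) S).hasSum
  let φ11 : Matrix (l ⊕ p) (l ⊕ p) ℂ →+ Matrix l l ℂ :=
    AddMonoidHom.mk' Matrix.toBlocks₁₁ (fun M N => rfl)
  let φ12 : Matrix (l ⊕ p) (l ⊕ p) ℂ →+ Matrix l p ℂ :=
    AddMonoidHom.mk' Matrix.toBlocks₁₂ (fun M N => rfl)
  let φ22 : Matrix (l ⊕ p) (l ⊕ p) ℂ →+ Matrix p p ℂ :=
    AddMonoidHom.mk' Matrix.toBlocks₂₂ (fun M N => rfl)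
  have c11 : Continuous φ11 := continuous_matrix fun i j => continuous_id.matrix_elem _ _
  have c12 : Continuous φ12 := continuous_matrix fun i j => continuous_id.matrix_elem _ _
  have c22 : Continuous φ22 := continuous_matrix fun i j => continuous_id.matrix_elem _ _
  have hblocks : ∀ k : ℕ, (S ^ k).toBlocks₁₁ = B ^ k ∧ (S ^ k).toBlocks₁₂ = 0 ∧
      (S ^ k).toBlocks₂₂ = D ^ k := by
    intro k
    obtain ⟨E, hE⟩ := pow_fromBlocks B Cm D k
    rw [hE]
    exact ⟨rfl, rfl, rfl⟩
  have h11 : HasSum (fun k : ℕ => (k ! : ℝ)⁻¹ • B ^ k) (NormedSpace.exp S).toBlocks₁₁ := by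
    have h := hsum.map φ11 c11
    rwa [show (⇑φ11 ∘ fun k : ℕ => (k ! : ℝ)⁻¹ • S ^ k) = fun k : ℕ => (k ! : ℝ)⁻¹ • B ^ k from
      funext fun k => by
        show ((k ! : ℝ)⁻¹ • S ^ k).toBlocks₁₁ = (k ! : ℝ)⁻¹ • B ^ k
        rw [← (hblocks k).1]; rfl] at h
  have h12 : HasSum (fun _ : ℕ => (0 : Matrix l p ℂ)) (NormedSpace.exp S).toBlocks₁₂ := by
    have h := hsum.map φ12 c12
    rwa [show (⇑φ12 ∘ fun k : ℕ => (k ! : ℝ)⁻¹ • S ^ k) = fun _ : ℕ => (0 : Matrix l p ℂ) from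
      funext fun k => by
        show (k ! : ℝ)⁻¹ • (S ^ k).toBlocks₁₂ = 0
        rw [(hblocks k).2.1, smul_zero]] at h
  have h22 : HasSum (fun k : ℕ => (k ! : ℝ)⁻¹ • D ^ k) (NormedSpace.exp S).toBlocks₂₂ := by
    have h := hsum.map φ22 c22
    rwa [show (⇑φ22 ∘ fun k : ℕ => (k ! : ℝ)⁻¹ • S ^ k) = fun k : ℕ => (k ! : ℝ)⁻¹ • D ^ k from
      funext fun k => by
        show ((k ! : ℝ)⁻¹ • S ^ k).toBlocks₂₂ = (k ! : ℝ)⁻¹ • D ^ k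
        rw [← (hblocks k).2.2]; rfl] at h
  have e11 : (NormedSpace.exp S).toBlocks₁₁ = NormedSpace.exp B := by
    conv_rhs => rw [NormedSpace.exp_eq_tsum ℝ]
    exact h11.tsum_eq.symm
  have e12 : (NormedSpace.exp S).toBlocks₁₂ = 0 := (h12.unique hasSum_zero)
  have e22 : (NormedSpace.exp S).toBlocks₂₂ = NormedSpace.exp D := by
    conv_rhs => rw [NormedSpace.exp_eq_tsum ℝ]
    exact h22.tsum_eq.symm
  conv_lhs => rw [← fromBlocks_toBlocks (NormedSpace.exp S), e11, e12, e22]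

end ComplexMatrix

/-- Evaluation of a `1 × 1` matrix at its unique entry, as a ring homomorphism. -/
def entryHom : Matrix (Fin 1) (Fin 1) ℂ →+* ℂ where
  toFun M := M 0 0
  map_one' := by simp [Matrix.one_apply]
  map_mul' M N := by simp [Matrix.mul_apply]
  map_zero' := rfl
  map_add' M N := rfl

lemma exp_one_by_one (D : Matrix (Fin 1) (Fin 1) ℂ) :
    NormedSpace.exp D 0 0 = Complex.exp (D 0 0) := by
  letI : SeminormedRing (Matrix (Fin 1) (Fin 1) ℂ) := Matrix.linftyOpSemiNormedRing
  letI : NormedRing (Matrix (Fin 1) (Fin 1) ℂ) := Matrix.linftyOpNormedRing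
  letI : NormedAlgebra ℝ (Matrix (Fin 1) (Fin 1) ℂ) := Matrix.linftyOpNormedAlgebra
  letI : NormedAlgebra ℚ (Matrix (Fin 1) (Fin 1) ℂ) := NormedAlgebra.restrictScalars ℚ ℝ _
  have h := NormedSpace.map_exp entryHom (continuous_id.matrix_elem 0 0) D
  have h2 : entryHom (NormedSpace.exp D) = NormedSpace.exp (entryHom D) := h
  rw [show (entryHom (NormedSpace.exp D) : ℂ) = NormedSpace.exp D 0 0 from rfl] at h2
  rw [h2, ← Complex.exp_eq_exp_ℂ]
  rfl

lemma charpoly_one_by_one (D : Matrix (Fin 1) (Fin 1) ℂ) :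
    D.charpoly = X - C (D 0 0) := by
  rw [show D.charpoly = (charmatrix D).det from rfl, Matrix.det_fin_one, charmatrix_apply_eq]

lemma charpoly_exp_fin : ∀ (m : ℕ) (M : Matrix (Fin m) (Fin m) ℂ),
    (NormedSpace.exp M).charpoly =
      (M.charpoly.roots.map (fun z => X - C (Complex.exp z))).prod := by
  intro m
  induction m with
  | zero =>
    intro M
    have h1 : ∀ (N : Matrix (Fin 0) (Fin 0) ℂ), N.charpoly = 1 := fun N => by
      rw [show N.charpoly = (charmatrix N).det from rfl, Matrix.det_isEmpty]
    rw [h1, h1, roots_one]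
    simp
  | succ m ih =>
    intro M
    -- find an eigenvalue
    have hdeg : 0 < M.charpoly.degree := by
      rw [Matrix.charpoly_degree_eq_dim]
      simp only [Fintype.card_fin]
      exact_mod_cast Nat.succ_pos m
    obtain ⟨μ, hμ⟩ := Complex.exists_root hdeg
    -- find an eigenvector
    have hdet : (μ • (1 : Matrix (Fin (m+1)) (Fin (m+1)) ℂ) - M).det = 0 := by
      have hmap : (charmatrix M).map (evalRingHom μ) = μ • 1 - M := by
        ext i j
        by_cases h : i = j
        · subst h
          simp [charmatrix_apply_eq, Matrix.one_apply, Matrix.smul_apply]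
        · simp [charmatrix_apply_ne _ _ _ h, Matrix.one_apply_ne h, Matrix.smul_apply]
      have := RingHom.map_det (evalRingHom μ) (charmatrix M)
      rw [RingHom.mapMatrix_apply, hmap] at this
      rw [← this]
      exact hμ
    obtain ⟨v, hv0, hv⟩ := (Matrix.exists_mulVec_eq_zero_iff).mpr hdet
    have hMv : M.mulVec v = μ • v := by
      have := hv
      rw [Matrix.sub_mulVec, sub_eq_zero] at this
      rw [← this, Matrix.smul_mulVec, Matrix.one_mulVec]
    obtain ⟨i₀, hi₀⟩ := Function.ne_iff.mp hv0
    have hvi₀ : v i₀ ≠ 0 := hi₀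
    -- the change-of-basis matrix
    set P : Matrix (Fin (m+1)) (Fin (m+1)) ℂ := (1 : Matrix _ _ ℂ).updateCol i₀ v with hP
    have hdetP : P.det = v i₀ := by
      rw [hP, ← Matrix.cramer_apply, Matrix.cramer_one]
      rfl
    have hPu : IsUnit P.det := by
      rw [hdetP]
      exact isUnit_iff_ne_zero.mpr hvi₀
    have hPunit : IsUnit P := (Matrix.isUnit_iff_isUnit_det P).mpr hPu
    set N : Matrix (Fin (m+1)) (Fin (m+1)) ℂ := P⁻¹ * M * P with hN
    -- the distinguished column of N
    have hcol : ∀ j, N j i₀ = if j = i₀ then μ else 0 := by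
      set eVec : Fin (m+1) → ℂ := Pi.single i₀ 1 with heVec
      have h1 : P.mulVec eVec = v := by
        funext i
        rw [Matrix.mulVec_single]
        simp [hP, Matrix.updateCol_self]
      have hPe : P⁻¹.mulVec v = eVec := by
        rw [← h1, Matrix.mulVec_mulVec, Matrix.nonsing_inv_mul _ hPu, Matrix.one_mulVec]
      have h2 : N.mulVec eVec = μ • eVec := by
        calc N.mulVec eVec
            = P⁻¹.mulVec (M.mulVec (P.mulVec eVec)) := by
              rw [Matrix.mulVec_mulVec, Matrix.mulVec_mulVec, hN]
          _ = P⁻¹.mulVec (μ • v) := by rw [h1, hMv]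
          _ = μ • P⁻¹.mulVec v := Matrix.mulVec_smul _ _ _
          _ = μ • eVec := by rw [hPe]
      intro j
      have := congrFun h2 j
      rw [Matrix.mulVec_single] at this
      simpa [heVec, Pi.single_apply] using this
    -- reindex to split off the eigen-direction
    set e : Fin (m+1) ≃ Fin m ⊕ Fin 1 :=
      (Equiv.swap i₀ (Fin.last m)).trans finSumFinEquiv.symm with he
    have hesymm : ∀ x, e.symm x = Equiv.swap i₀ (Fin.last m) (finSumFinEquiv x) := fun x => rfl
    have heinr : e.symm (Sum.inr 0) = i₀ := by
      rw [hesymm, finSumFinEquiv_apply_right]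
      have : (Fin.natAdd m 0 : Fin (m+1)) = Fin.last m := by
        ext; simp
      rw [this, Equiv.swap_apply_right]
    set N' : Matrix (Fin m ⊕ Fin 1) (Fin m ⊕ Fin 1) ℂ := reindex e e N with hN'
    have hblock12 : N'.toBlocks₁₂ = 0 := by
      ext a b
      have hb : b = 0 := Subsingleton.elim b 0
      subst hb
      show N' (Sum.inl a) (Sum.inr 0) = 0
      rw [hN']
      show N (e.symm (Sum.inl a)) (e.symm (Sum.inr 0)) = 0
      rw [heinr, hcol]
      rw [if_neg]
      intro h
      have : Sum.inl a = Sum.inr (0 : Fin 1) := by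
        have := congrArg e (h.trans heinr.symm)
        simpa using this
      exact Sum.inl_ne_inr this
    have hμblock : N'.toBlocks₂₂ 0 0 = μ := by
      show N (e.symm (Sum.inr 0)) (e.symm (Sum.inr 0)) = μ
      rw [heinr, hcol, if_pos rfl]
    have hsplit : N' = fromBlocks N'.toBlocks₁₁ 0 N'.toBlocks₂₁ N'.toBlocks₂₂ := by
      rw [← hblock12, fromBlocks_toBlocks]
    -- charpoly bookkeeping
    have hcharN' : N'.charpoly = N'.toBlocks₁₁.charpoly * (X - C μ) := by
      conv_lhs => rw [hsplit]
      rw [Matrix.charpoly_fromBlocks_zero₁₂, charpoly_one_by_one, hμblock]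
    have hchar : M.charpoly = N'.toBlocks₁₁.charpoly * (X - C μ) := by
      rw [← charpoly_conj' hPu M, ← hN, ← Matrix.charpoly_reindex e N, ← hN', hcharN']
    -- exp bookkeeping
    have hexp : (NormedSpace.exp M).charpoly =
        (NormedSpace.exp N'.toBlocks₁₁).charpoly * (X - C (Complex.exp μ)) := by
      have h1 : NormedSpace.exp N = P⁻¹ * NormedSpace.exp M * P :=
        Matrix.exp_conj' P M hPunit
      obtain ⟨E, hE⟩ := exp_fromBlocks N'.toBlocks₁₁ N'.toBlocks₂₁ N'.toBlocks₂₂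
      have h2 : (NormedSpace.exp N').charpoly =
          (NormedSpace.exp N'.toBlocks₁₁).charpoly * (X - C (Complex.exp μ)) := by
        conv_lhs => rw [hsplit]
        rw [hE, Matrix.charpoly_fromBlocks_zero₁₂, charpoly_one_by_one,
          exp_one_by_one, hμblock]
      have h3 : (NormedSpace.exp N').charpoly = (NormedSpace.exp M).charpoly := by
        rw [hN', exp_reindex, Matrix.charpoly_reindex, h1, charpoly_conj' hPu]
      rw [← h3, h2]
    -- roots bookkeeping
    have hroots : M.charpoly.roots = N'.toBlocks₁₁.charpoly.roots + {μ} := by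
      rw [hchar, roots_mul, roots_X_sub_C]
      exact mul_ne_zero N'.toBlocks₁₁.charpoly_monic.ne_zero (X_sub_C_ne_zero μ)
    rw [hexp, hroots, Multiset.map_add, Multiset.prod_add, ih]
    simp

lemma charpoly_exp {m : Type*} [Fintype m] [DecidableEq m] (M : Matrix m m ℂ) :
    (NormedSpace.exp M).charpoly =
      (M.charpoly.roots.map (fun z => X - C (Complex.exp z))).prod := by
  obtain e := Fintype.equivFin m
  rw [← Matrix.charpoly_reindex e (NormedSpace.exp M), ← exp_reindex,
    charpoly_exp_fin, Matrix.charpoly_reindex]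


/-- the standard eigenvalues of `exp A` are the images of the standard
eigenvalues of `A` under `f(λ) = e^λ` if `Im(e^λ) ≥ 0`, else `f(λ) = e^{conj λ}`. -/
theorem stmt3 {n : ℕ} (A : Matrix (Fin n) (Fin n) ℍ[ℝ]) (f : ℂ → ℂ)
    (hf : ∀ l : ℂ, f l = if 0 ≤ (Complex.exp l).im then Complex.exp l
      else Complex.exp (starRingEnd ℂ l))
    (s : Multiset ℂ) (hs : IsStdEigs A s) :
    IsStdEigs (NormedSpace.exp A) (s.map f) := by
  obtain ⟨hcard, him, hchar⟩ := hs
  refine ⟨by simpa using hcard, ?_, ?_⟩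
  · intro z hz
    obtain ⟨w, hw, rfl⟩ := Multiset.mem_map.mp hz
    rw [hf]
    split_ifs with h
    · exact h
    · push_neg at h
      rw [Complex.exp_conj]
      simp only [Complex.conj_im]
      linarith
  · have h1 : chiMat (NormedSpace.exp A) = NormedSpace.exp (chiMat A) := chiMat_exp A
    rw [h1, charpoly_exp]
    have hroots : (chiMat A).charpoly.roots = s + s.map (starRingEnd ℂ) := by
      rw [hchar]
      have heq : (s.map (fun z => (X - C z) * (X - C (starRingEnd ℂ z)))).prod =
          ((s + s.map (starRingEnd ℂ)).map (fun z => X - C z)).prod := by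
        rw [Multiset.map_add, Multiset.prod_add, Multiset.map_map, ← Multiset.prod_map_mul]
        rfl
      rw [heq, roots_multiset_prod_X_sub_C]
    rw [hroots, Multiset.map_add, Multiset.prod_add, Multiset.map_map, Multiset.map_map,
      ← Multiset.prod_map_mul]
    refine congrArg Multiset.prod (Multiset.map_congr rfl fun z _ => ?_)
    simp only [Function.comp_apply]
    rw [hf z]
    split_ifs with h
    · rw [Complex.exp_conj]
    · simp only [Complex.exp_conj, Complex.conj_conj]
      ring
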